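/- If u ∧ Φ = 0 pointwise (u, Φ : ℝ² → ℝ² with u₁Φ₂ = u₂Φ₁ everywhere) and rot u ∈ L², then ⟨u ∧ Φ, rot u⟩_{L²} = 0; combined with the previous identity this gives: if u, Φ are both everywhere orthogonal to a vector field ∇b that never vanishes on an open set 𝒪, and Φ is divergence-free and supported in 𝒪, then ∫_𝒪 (u · ∇_h u) · Φ dx = 0. -/

import Mathlib

open MeasureTheory

local notation "E2" => EuclideanSpace ℝ (Fin 2)

/-- Partial derivative in the `i`-th coordinate direction of a scalar function on `ℝ²`. -/
noncomputable def pd (i : Fin 2) (f : E2 → ℝ) (x : E2) : ℝ :=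
  fderiv ℝ f x (EuclideanSpace.single i 1)

lemma pd_mul {f g : E2 → ℝ} (hf : Differentiable ℝ f) (hg : Differentiable ℝ g)
    (i : Fin 2) (x : E2) :
    pd i (fun y => f y * g y) x = f x * pd i g x + g x * pd i f x := by
  unfold pd
  rw [fderiv_fun_mul (hf x) (hg x)]
  simp [mul_comm]

lemma pd_add {f g : E2 → ℝ} (hf : Differentiable ℝ f) (hg : Differentiable ℝ g)
    (i : Fin 2) (x : E2) :
    pd i (fun y => f y + g y) x = pd i f x + pd i g x := by
  unfold pd
  rw [fderiv_fun_add (hf x) (hg x)]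
  simp

lemma pd_continuous {f : E2 → ℝ} (hf : ContDiff ℝ 1 f) (i : Fin 2) :
    Continuous (pd i f) :=
  (hf.continuous_fderiv one_ne_zero).clm_apply continuous_const

lemma pd_hasCompactSupport {f : E2 → ℝ} (hf : HasCompactSupport f) (i : Fin 2) :
    HasCompactSupport (pd i f) :=
  hf.fderiv_apply ℝ (EuclideanSpace.single i 1)

/-- If `u ∧ Φ = 0` pointwise then `⟨u ∧ Φ, rot u⟩_{L²} = 0`; consequently, on an open set `𝒪`
where `∇b` never vanishes, if `u` and `Φ` are everywhere orthogonal to `∇b`, and `Φ` is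
divergence-free and supported in `𝒪`, then `∫_𝒪 (u·∇_h u)·Φ dx = 0`. -/
theorem convection_term_vanishes
    (b : E2 → ℝ) (hb : ContDiff ℝ 1 b) (𝒪 : Set E2) (hO : IsOpen 𝒪)
    (u Φ : E2 → E2) (hu : ContDiff ℝ 1 u) (hΦ : ContDiff ℝ 1 Φ)
    (hΦc : HasCompactSupport Φ) (hΦsupp : tsupport Φ ⊆ 𝒪)
    (hΦdiv : ∀ x, pd 0 (fun y => Φ y 0) x + pd 1 (fun y => Φ y 1) x = 0)
    (hgrad_ne : ∀ x ∈ 𝒪, ¬(pd 0 b x = 0 ∧ pd 1 b x = 0))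
    (hu_orth : ∀ x ∈ 𝒪, u x 0 * pd 0 b x + u x 1 * pd 1 b x = 0)
    (hΦ_orth : ∀ x ∈ 𝒪, Φ x 0 * pd 0 b x + Φ x 1 * pd 1 b x = 0) :
    ((∀ x, u x 0 * Φ x 1 = u x 1 * Φ x 0) →
      (∫ x : E2, (u x 0 * Φ x 1 - u x 1 * Φ x 0)
        * (pd 0 (fun y => u y 1) x - pd 1 (fun y => u y 0) x)) = 0)
    ∧ (∫ x in 𝒪,
        ((u x 0 * pd 0 (fun y => u y 0) x + u x 1 * pd 1 (fun y => u y 0) x) * Φ x 0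
          + (u x 0 * pd 0 (fun y => u y 1) x + u x 1 * pd 1 (fun y => u y 1) x) * Φ x 1)) = 0 := by
  constructor
  · intro hpar
    simp only [hpar, sub_self, zero_mul, integral_zero]
  -- component functions
  have hui : ∀ i, ContDiff ℝ 1 (fun x : E2 => u x i) := contDiff_euclidean.mp hu
  have hΦi : ∀ i, ContDiff ℝ 1 (fun x : E2 => Φ x i) := contDiff_euclidean.mp hΦ
  have hΦic : ∀ i, HasCompactSupport (fun x : E2 => Φ x i) := fun i =>
    hΦc.comp_left (g := fun v : E2 => v i) rfl
  -- the function h = |u|²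
  set h : E2 → ℝ := fun x => u x 0 * u x 0 + u x 1 * u x 1 with hh_def
  have hh : ContDiff ℝ 1 h := ((hui 0).mul (hui 0)).add ((hui 1).mul (hui 1))
  have hpdh : ∀ i x, pd i h x
      = 2 * (u x 0 * pd i (fun y => u y 0) x + u x 1 * pd i (fun y => u y 1) x) := by
    intro i x
    have h0 := (hui 0).differentiable one_ne_zero
    have h1 := (hui 1).differentiable one_ne_zero
    rw [hh_def, pd_add (h0.fun_mul h0) (h1.fun_mul h1), pd_mul h0 h0, pd_mul h1 h1]
    ring
  -- integration by parts
  have key : ∀ i : Fin 2,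
      (∫ x : E2, pd i h x * Φ x i) = - ∫ x : E2, h x * pd i (fun y => Φ y i) x := by
    intro i
    have h1 : Integrable (fun x : E2 => pd i h x * Φ x i) := by
      exact ((pd_continuous hh i).mul ((hΦi i).continuous)).integrable_of_hasCompactSupport
        ((hΦic i).mul_left)
    have h2 : Integrable (fun x : E2 => h x * pd i (fun y => Φ y i) x) := by
      exact (hh.continuous.mul (pd_continuous (hΦi i) i)).integrable_of_hasCompactSupport
        ((pd_hasCompactSupport (hΦic i) i).mul_left)
    have h3 : Integrable (fun x : E2 => h x * Φ x i) := by
      exact (hh.continuous.mul ((hΦi i).continuous)).integrable_of_hasCompactSupport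
        ((hΦic i).mul_left)
    have := integral_mul_fderiv_eq_neg_fderiv_mul_of_integrable
      (μ := (volume : Measure E2)) (f := h) (g := fun x => Φ x i)
      (v := EuclideanSpace.single i 1) h1 h2 h3
      (fun x _ => hh.differentiable one_ne_zero x) (fun x _ => (hΦi i).differentiable one_ne_zero x)
    unfold pd
    rw [this]
    simp [pd]
  -- the divergence-free sum vanishes
  have sum0 : (∫ x : E2, (pd 0 h x * Φ x 0 + pd 1 h x * Φ x 1)) = 0 := by
    have h1 : Integrable (fun x : E2 => pd 0 h x * Φ x 0) :=
      ((pd_continuous hh 0).mul ((hΦi 0).continuous)).integrable_of_hasCompactSupport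
        ((hΦic 0).mul_left)
    have h2 : Integrable (fun x : E2 => pd 1 h x * Φ x 1) :=
      ((pd_continuous hh 1).mul ((hΦi 1).continuous)).integrable_of_hasCompactSupport
        ((hΦic 1).mul_left)
    have h3 : Integrable (fun x : E2 => h x * pd 0 (fun y => Φ y 0) x) :=
      (hh.continuous.mul (pd_continuous (hΦi 0) 0)).integrable_of_hasCompactSupport
        ((pd_hasCompactSupport (hΦic 0) 0).mul_left)
    have h4 : Integrable (fun x : E2 => h x * pd 1 (fun y => Φ y 1) x) :=
      (hh.continuous.mul (pd_continuous (hΦi 1) 1)).integrable_of_hasCompactSupport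
        ((pd_hasCompactSupport (hΦic 1) 1).mul_left)
    rw [integral_add h1 h2, key 0, key 1, ← neg_add, ← integral_add h3 h4]
    have : ∀ x : E2, h x * pd 0 (fun y => Φ y 0) x + h x * pd 1 (fun y => Φ y 1) x = 0 := by
      intro x
      linear_combination h x * hΦdiv x
    simp only [this, integral_zero, neg_zero]
  -- pointwise parallelism on 𝒪
  have hpar : ∀ x ∈ 𝒪, u x 0 * Φ x 1 = u x 1 * Φ x 0 := by
    intro x hx
    have hg := hgrad_ne x hx
    have e1 : (u x 0 * Φ x 1 - u x 1 * Φ x 0) * pd 0 b x = 0 := by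
      linear_combination Φ x 1 * hu_orth x hx - u x 1 * hΦ_orth x hx
    have e2 : (u x 0 * Φ x 1 - u x 1 * Φ x 0) * pd 1 b x = 0 := by
      linear_combination u x 0 * hΦ_orth x hx - Φ x 0 * hu_orth x hx
    rcases mul_eq_zero.mp e1 with h | h
    · linarith
    rcases mul_eq_zero.mp e2 with h' | h'
    · linarith
    exact absurd ⟨h, h'⟩ hg
  -- identify the set integrand with the indicator of the nice function
  have hind : ∀ x : E2,
      𝒪.indicator (fun x =>
        ((u x 0 * pd 0 (fun y => u y 0) x + u x 1 * pd 1 (fun y => u y 0) x) * Φ x 0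
          + (u x 0 * pd 0 (fun y => u y 1) x + u x 1 * pd 1 (fun y => u y 1) x) * Φ x 1)) x
      = (pd 0 h x * Φ x 0 + pd 1 h x * Φ x 1) / 2 := by
    intro x
    by_cases hx : x ∈ 𝒪
    · rw [Set.indicator_of_mem hx, hpdh 0 x, hpdh 1 x]
      linear_combination (pd 0 (fun y => u y 1) x - pd 1 (fun y => u y 0) x) * hpar x hx
    · have hΦ0 : Φ x = 0 := image_eq_zero_of_notMem_tsupport (fun hmem => hx (hΦsupp hmem))
      rw [Set.indicator_of_notMem hx, hΦ0]
      simp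
  rw [← integral_indicator hO.measurableSet]
  simp only [hind]
  rw [integral_div, sum0]
  norm_num
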